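/- (Lemma 4.1.) Let n ≥ 1, 1 ≤ p < ∞, 0 ≤ λ ≤ 1, x₀ ∈ ℝⁿ and r₀ > 0. Then the unweighted Morrey norm of the characteristic function of the ball B(x₀,r₀) is ‖χ_{B(x₀,r₀)}‖_{p,λ} = |B(x₀,r₀)|^{(1−λ)/p}, where |B(x₀,r₀)| is the Lebesgue measure of the ball. -/

import Mathlib

open MeasureTheory

/-- The weighted Morrey norm on `ℝⁿ`: supremum over all balls `B(x,r)` of
`( |B(x,r)|^{-λ} ∫_{B(x,r)} |f|^p w )^{1/p}`, with values in `[0,∞]`. -/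
noncomputable def morreyNorm {n : ℕ} (p lam : ℝ)
    (w f : EuclideanSpace ℝ (Fin n) → ℝ) : ENNReal :=
  ⨆ (x : EuclideanSpace ℝ (Fin n)) (r : ℝ) (_ : 0 < r),
    ((volume (Metric.ball x r)) ^ (-lam) *
      ∫⁻ y in Metric.ball x r, ENNReal.ofReal (|f y| ^ p * w y)) ^ (1 / p)

/-- Lemma 4.1: the unweighted Morrey norm of the characteristic function of a ball:
`‖χ_{B(x₀,r₀)}‖_{p,λ} = |B(x₀,r₀)|^{(1-λ)/p}`. -/
theorem stmt4 (n : ℕ) (hn : 1 ≤ n) (p lam : ℝ) (hp : 1 ≤ p)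
    (hlam0 : 0 ≤ lam) (hlam1 : lam ≤ 1)
    (x₀ : EuclideanSpace ℝ (Fin n)) (r₀ : ℝ) (hr₀ : 0 < r₀) :
    morreyNorm p lam (fun _ => 1) ((Metric.ball x₀ r₀).indicator 1) =
      (volume (Metric.ball x₀ r₀)) ^ ((1 - lam) / p) := by
  have hp0 : (0:ℝ) < p := lt_of_lt_of_le one_pos hp
  set B₀ := Metric.ball x₀ r₀ with hB₀def
  have hb0 : volume B₀ ≠ 0 := (Metric.measure_ball_pos volume x₀ hr₀).ne'
  have hbt : volume B₀ ≠ ⊤ := (measure_ball_lt_top).ne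
  have hint : ∀ (x : EuclideanSpace ℝ (Fin n)) (r : ℝ),
      (∫⁻ y in Metric.ball x r,
          ENNReal.ofReal (|B₀.indicator 1 y| ^ p * (fun _ => (1:ℝ)) y))
        = volume (B₀ ∩ Metric.ball x r) := by
    intro x r
    have h1 : ∀ y, ENNReal.ofReal (|B₀.indicator 1 y| ^ p * (fun _ => (1:ℝ)) y)
        = B₀.indicator (fun _ => (1:ENNReal)) y := by
      intro y
      by_cases hy : y ∈ B₀
      · simp [Set.indicator_of_mem hy]
      · simp [Set.indicator_of_notMem hy, Real.zero_rpow hp0.ne']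
    rw [lintegral_congr h1]; simp only [hB₀def]
    rw [lintegral_indicator measurableSet_ball, setLIntegral_one,
      Measure.restrict_apply measurableSet_ball]
  unfold morreyNorm
  apply le_antisymm
  · apply iSup_le; intro x
    apply iSup_le; intro r
    apply iSup_le; intro hr
    rw [hint x r]
    set a := volume (Metric.ball x r) with ha
    have ha0 : a ≠ 0 := (Metric.measure_ball_pos volume x hr).ne'
    have hat : a ≠ ⊤ := (measure_ball_lt_top).ne
    have hc : volume (B₀ ∩ Metric.ball x r) ≤ a ^ lam * (volume B₀) ^ (1 - lam) := by
      calc volume (B₀ ∩ Metric.ball x r)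
          = (volume (B₀ ∩ Metric.ball x r)) ^ lam *
              (volume (B₀ ∩ Metric.ball x r)) ^ (1 - lam) := by
            rw [← ENNReal.rpow_add_of_nonneg lam (1-lam) hlam0 (by linarith)]
            simp
        _ ≤ a ^ lam * (volume B₀) ^ (1 - lam) := by
            gcongr <;>
              first
                | linarith
                | exact measure_mono Set.inter_subset_right
                | exact measure_mono Set.inter_subset_left
                | exact Set.inter_subset_right
                | exact Set.inter_subset_left
    have key : a ^ (-lam) * volume (B₀ ∩ Metric.ball x r) ≤ (volume B₀) ^ (1 - lam) := by
      calc a ^ (-lam) * volume (B₀ ∩ Metric.ball x r)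
          ≤ a ^ (-lam) * (a ^ lam * (volume B₀) ^ (1 - lam)) := by gcongr
        _ = (volume B₀) ^ (1 - lam) := by
            rw [← mul_assoc, ← ENNReal.rpow_add _ _ ha0 hat]
            simp
    calc (a ^ (-lam) * volume (B₀ ∩ Metric.ball x r)) ^ (1 / p)
        ≤ ((volume B₀) ^ (1 - lam)) ^ (1 / p) :=
          ENNReal.rpow_le_rpow key (by positivity)
      _ = (volume B₀) ^ ((1 - lam) / p) := by
          rw [← ENNReal.rpow_mul]; ring_nf
  · apply le_iSup_of_le x₀
    apply le_iSup_of_le r₀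
    apply le_iSup_of_le hr₀
    rw [hint x₀ r₀, ← hB₀def, Set.inter_self]
    have h1 : volume B₀ ^ (-lam) * volume B₀ = volume B₀ ^ (1 - lam) := by
      nth_rewrite 2 [← ENNReal.rpow_one (volume B₀)]
      rw [← ENNReal.rpow_add _ _ hb0 hbt]
      ring_nf
    rw [h1, ← ENNReal.rpow_mul]
    ring_nf
    exact le_rfl
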